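/- Let a,b>0 and λ,μ,ν ∈ ℝ satisfy (|λ|+|μ|+|ν|)(a+b+ab) < 1. Then for any continuous g:[0,a]×[0,b]→ℝ, the integral equation φ(X,Y) + λ∫₀^X φ(x,Y)dx + μ∫₀^Y φ(X,y)dy + ν∫₀^X∫₀^Y φ(x,y)dxdy = g(X,Y) has a unique continuous solution φ on [0,a]×[0,b]. -/

import Mathlib

open MeasureTheory intervalIntegral

namespace TelegraphAux

/-- clamp to `[0,c]` -/
noncomputable def cl (c t : ℝ) : ℝ := max 0 (min t c)

lemma cl_mem {c : ℝ} (hc : 0 ≤ c) (t : ℝ) : cl c t ∈ Set.Icc 0 c :=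
  ⟨le_max_left _ _, max_le hc (min_le_right _ _)⟩

lemma cl_eq {c t : ℝ} (h : t ∈ Set.Icc 0 c) : cl c t = t := by
  unfold cl; rw [min_eq_left h.2, max_eq_right h.1]

lemma continuous_cl (c : ℝ) : Continuous (cl c) :=
  continuous_const.max (continuous_id.min continuous_const)

noncomputable abbrev E := BoundedContinuousFunction (ℝ × ℝ) ℝ

variable (a b lam mu nu : ℝ)

/-- the integral part of the operator, with clamped limits -/
noncomputable def J (f : E) (p : ℝ × ℝ) : ℝ :=
  lam * (∫ x in (0:ℝ)..cl a p.1, f (x, cl b p.2))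
  + mu * (∫ y in (0:ℝ)..cl b p.2, f (cl a p.1, y))
  + nu * (∫ x in (0:ℝ)..cl a p.1, ∫ y in (0:ℝ)..cl b p.2, f (x, y))

lemma cont_slice (f : E) (v : ℝ) : Continuous fun x : ℝ => f (x, v) :=
  f.continuous.comp (continuous_id.prodMk continuous_const)

lemma cont_slice' (f : E) (u : ℝ) : Continuous fun y : ℝ => f (u, y) :=
  f.continuous.comp (continuous_const.prodMk continuous_id)

lemma cont_inner (f : E) (c : ℝ) :
    Continuous fun x : ℝ => ∫ y in (0:ℝ)..c, f (x, y) := by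
  apply intervalIntegral.continuous_parametric_intervalIntegral_of_continuous'
  exact (by exact f.continuous : Continuous (Function.uncurry fun x y => f (x, y)))

lemma continuous_J (f : E) : Continuous (J a b lam mu nu f) := by
  unfold J
  have h1 : Continuous fun p : ℝ × ℝ => ∫ x in (0:ℝ)..cl a p.1, f (x, cl b p.2) := by
    apply intervalIntegral.continuous_parametric_intervalIntegral_of_continuous
      (f := fun (p : ℝ × ℝ) (x : ℝ) => f (x, cl b p.2))
    · exact f.continuous.comp
        (continuous_snd.prodMk ((continuous_cl b).comp continuous_fst.snd))
    · exact (continuous_cl a).comp continuous_fst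
  have h2 : Continuous fun p : ℝ × ℝ => ∫ y in (0:ℝ)..cl b p.2, f (cl a p.1, y) := by
    apply intervalIntegral.continuous_parametric_intervalIntegral_of_continuous
      (f := fun (p : ℝ × ℝ) (y : ℝ) => f (cl a p.1, y))
    · exact f.continuous.comp
        (((continuous_cl a).comp continuous_fst.fst).prodMk continuous_snd)
    · exact (continuous_cl b).comp continuous_snd
  have h3 : Continuous fun p : ℝ × ℝ =>
      ∫ x in (0:ℝ)..cl a p.1, ∫ y in (0:ℝ)..cl b p.2, f (x, y) := by
    apply intervalIntegral.continuous_parametric_intervalIntegral_of_continuous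
      (f := fun (p : ℝ × ℝ) (x : ℝ) => ∫ y in (0:ℝ)..cl b p.2, f (x, y))
    · apply intervalIntegral.continuous_parametric_intervalIntegral_of_continuous
        (f := fun (q : (ℝ × ℝ) × ℝ) (y : ℝ) => f (q.2, y))
      · exact f.continuous.comp (continuous_fst.snd.prodMk continuous_snd)
      · exact (continuous_cl b).comp continuous_fst.snd
    · exact (continuous_cl a).comp continuous_fst
  exact ((continuous_const.mul h1).add (continuous_const.mul h2)).add (continuous_const.mul h3)

lemma J_bound (ha : 0 ≤ a) (hb : 0 ≤ b) (f : E) (p : ℝ × ℝ) :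
    |J a b lam mu nu f p| ≤ (|lam| * a + |mu| * b + |nu| * (a * b)) * ‖f‖ := by
  have hca := cl_mem ha p.1
  have hcb := cl_mem hb p.2
  have key : ∀ (c u M : ℝ), u ∈ Set.Icc 0 c → 0 ≤ M → ∀ h : ℝ → ℝ,
      (∀ x, |h x| ≤ M) → |∫ x in (0:ℝ)..u, h x| ≤ M * c := by
    intro c u M hu hM h hh
    have h1 : ‖∫ x in (0:ℝ)..u, h x‖ ≤ M * |u - 0| :=
      intervalIntegral.norm_integral_le_of_norm_le_const fun x _ => by
        rw [Real.norm_eq_abs]; exact hh x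
    rw [Real.norm_eq_abs] at h1
    refine h1.trans ?_
    rw [sub_zero, abs_of_nonneg hu.1]
    exact mul_le_mul_of_nonneg_left hu.2 hM
  have hfb : ∀ q : ℝ × ℝ, |f q| ≤ ‖f‖ := fun q => by
    rw [← Real.norm_eq_abs]; exact f.norm_coe_le_norm q
  have e1 := key a _ ‖f‖ hca (norm_nonneg f) (fun x => f (x, cl b p.2)) (fun x => hfb _)
  have e2 := key b _ ‖f‖ hcb (norm_nonneg f) (fun y => f (cl a p.1, y)) (fun y => hfb _)
  have e3 := key a _ (‖f‖ * b) hca (mul_nonneg (norm_nonneg f) hb)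
      (fun x => ∫ y in (0:ℝ)..cl b p.2, f (x, y))
      (fun x => key b _ ‖f‖ hcb (norm_nonneg f) (fun y => f (x, y)) (fun y => hfb _))
  unfold J
  calc |lam * (∫ x in (0:ℝ)..cl a p.1, f (x, cl b p.2))
        + mu * (∫ y in (0:ℝ)..cl b p.2, f (cl a p.1, y))
        + nu * (∫ x in (0:ℝ)..cl a p.1, ∫ y in (0:ℝ)..cl b p.2, f (x, y))|
      ≤ |lam * (∫ x in (0:ℝ)..cl a p.1, f (x, cl b p.2))|
        + |mu * (∫ y in (0:ℝ)..cl b p.2, f (cl a p.1, y))|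
        + |nu * (∫ x in (0:ℝ)..cl a p.1, ∫ y in (0:ℝ)..cl b p.2, f (x, y))| :=
          abs_add_three _ _ _
    _ = |lam| * |∫ x in (0:ℝ)..cl a p.1, f (x, cl b p.2)|
        + |mu| * |∫ y in (0:ℝ)..cl b p.2, f (cl a p.1, y)|
        + |nu| * |∫ x in (0:ℝ)..cl a p.1, ∫ y in (0:ℝ)..cl b p.2, f (x, y)| := by
          rw [abs_mul, abs_mul, abs_mul]
    _ ≤ |lam| * (‖f‖ * a) + |mu| * (‖f‖ * b) + |nu| * (‖f‖ * b * a) := by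
          refine add_le_add (add_le_add ?_ ?_) ?_
          · exact mul_le_mul_of_nonneg_left e1 (abs_nonneg _)
          · exact mul_le_mul_of_nonneg_left e2 (abs_nonneg _)
          · exact mul_le_mul_of_nonneg_left e3 (abs_nonneg _)
    _ = (|lam| * a + |mu| * b + |nu| * (a * b)) * ‖f‖ := by ring

lemma J_sub (f f' : E) (p : ℝ × ℝ) :
    J a b lam mu nu f p - J a b lam mu nu f' p = J a b lam mu nu (f - f') p := by
  have i1 : ∀ (h : E) (v u : ℝ), IntervalIntegrable (fun x => h (x, v)) volume 0 u :=
    fun h v u => (cont_slice h v).intervalIntegrable _ _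
  have i2 : ∀ (h : E) (u v : ℝ), IntervalIntegrable (fun y => h (u, y)) volume 0 v :=
    fun h u v => (cont_slice' h u).intervalIntegrable _ _
  have i3 : ∀ (h : E) (c u : ℝ),
      IntervalIntegrable (fun x => ∫ y in (0:ℝ)..c, h (x, y)) volume 0 u :=
    fun h c u => (cont_inner h c).intervalIntegrable _ _
  unfold J
  have e1 : (∫ x in (0:ℝ)..cl a p.1, (f - f') (x, cl b p.2))
      = (∫ x in (0:ℝ)..cl a p.1, f (x, cl b p.2)) - ∫ x in (0:ℝ)..cl a p.1, f' (x, cl b p.2) := by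
    rw [← intervalIntegral.integral_sub (i1 f _ _) (i1 f' _ _)]
    simp
  have e2 : (∫ y in (0:ℝ)..cl b p.2, (f - f') (cl a p.1, y))
      = (∫ y in (0:ℝ)..cl b p.2, f (cl a p.1, y)) - ∫ y in (0:ℝ)..cl b p.2, f' (cl a p.1, y) := by
    rw [← intervalIntegral.integral_sub (i2 f _ _) (i2 f' _ _)]
    simp
  have e3 : (∫ x in (0:ℝ)..cl a p.1, ∫ y in (0:ℝ)..cl b p.2, (f - f') (x, y))
      = (∫ x in (0:ℝ)..cl a p.1, ∫ y in (0:ℝ)..cl b p.2, f (x, y))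
        - ∫ x in (0:ℝ)..cl a p.1, ∫ y in (0:ℝ)..cl b p.2, f' (x, y) := by
    rw [← intervalIntegral.integral_sub (i3 f _ _) (i3 f' _ _)]
    apply intervalIntegral.integral_congr
    intro x _
    dsimp only
    rw [← intervalIntegral.integral_sub (i2 f _ _) (i2 f' _ _)]
    simp
  rw [e1, e2, e3]; ring

end TelegraphAux

open TelegraphAux

/-- Existence and uniqueness of continuous solutions to the integrated telegraph
equation on `[0,a] × [0,b]` under the contraction condition. -/
theorem stmt_0 (a b lam mu nu : ℝ) (ha : 0 < a) (hb : 0 < b)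
    (hsmall : (|lam| + |mu| + |nu|) * (a + b + a * b) < 1)
    (g : ℝ → ℝ → ℝ)
    (hg : ContinuousOn (fun p : ℝ × ℝ => g p.1 p.2) (Set.Icc 0 a ×ˢ Set.Icc 0 b)) :
    ∃ φ : ℝ → ℝ → ℝ,
      (ContinuousOn (fun p : ℝ × ℝ => φ p.1 p.2) (Set.Icc 0 a ×ˢ Set.Icc 0 b) ∧
        ∀ X ∈ Set.Icc (0:ℝ) a, ∀ Y ∈ Set.Icc (0:ℝ) b,
          φ X Y + lam * (∫ x in (0:ℝ)..X, φ x Y) + mu * (∫ y in (0:ℝ)..Y, φ X y)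
            + nu * (∫ x in (0:ℝ)..X, ∫ y in (0:ℝ)..Y, φ x y) = g X Y) ∧
      ∀ φ' : ℝ → ℝ → ℝ,
        (ContinuousOn (fun p : ℝ × ℝ => φ' p.1 p.2) (Set.Icc 0 a ×ˢ Set.Icc 0 b) ∧
          ∀ X ∈ Set.Icc (0:ℝ) a, ∀ Y ∈ Set.Icc (0:ℝ) b,
            φ' X Y + lam * (∫ x in (0:ℝ)..X, φ' x Y) + mu * (∫ y in (0:ℝ)..Y, φ' X y)
              + nu * (∫ x in (0:ℝ)..X, ∫ y in (0:ℝ)..Y, φ' x y) = g X Y) →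
        ∀ X ∈ Set.Icc (0:ℝ) a, ∀ Y ∈ Set.Icc (0:ℝ) b, φ' X Y = φ X Y := by
  classical
  set L : ℝ := |lam| * a + |mu| * b + |nu| * (a * b) with hLdef
  have hL0 : 0 ≤ L := by
    have := abs_nonneg lam; have := abs_nonneg mu; have := abs_nonneg nu
    have := mul_nonneg ha.le hb.le
    positivity
  have hL1 : L < 1 := by
    nlinarith [abs_nonneg lam, abs_nonneg mu, abs_nonneg nu, ha.le, hb.le,
      mul_nonneg ha.le hb.le, mul_nonneg (abs_nonneg lam) (mul_nonneg ha.le hb.le),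
      mul_nonneg (abs_nonneg lam) hb.le, mul_nonneg (abs_nonneg mu) ha.le,
      mul_nonneg (abs_nonneg mu) (mul_nonneg ha.le hb.le),
      mul_nonneg (abs_nonneg nu) ha.le, mul_nonneg (abs_nonneg nu) hb.le]
  have hKcomp : IsCompact (Set.Icc (0:ℝ) a ×ˢ Set.Icc (0:ℝ) b) :=
    isCompact_Icc.prod isCompact_Icc
  obtain ⟨C, hC⟩ := hKcomp.exists_bound_of_continuousOn hg
  -- the extended g
  have hrmem : ∀ p : ℝ × ℝ, (cl a p.1, cl b p.2) ∈ Set.Icc (0:ℝ) a ×ˢ Set.Icc (0:ℝ) b :=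
    fun p => ⟨cl_mem ha.le _, cl_mem hb.le _⟩
  set gt : ℝ × ℝ → ℝ := fun p => g (cl a p.1) (cl b p.2) with hgt
  have hrcont : Continuous fun p : ℝ × ℝ => (cl a p.1, cl b p.2) :=
    ((continuous_cl a).comp continuous_fst).prodMk ((continuous_cl b).comp continuous_snd)
  have hgtc : Continuous gt := hg.comp_continuous hrcont hrmem
  have hgtb : ∀ p, ‖gt p‖ ≤ C := fun p => hC _ (hrmem p)
  -- the operator
  set Θraw : E → ℝ × ℝ → ℝ := fun f p => gt p - J a b lam mu nu f p with hΘraw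
  have hΘc : ∀ f : E, Continuous (Θraw f) := fun f => hgtc.sub (continuous_J a b lam mu nu f)
  have hΘb : ∀ (f : E) (p), ‖Θraw f p‖ ≤ C + L * ‖f‖ := by
    intro f p
    calc ‖Θraw f p‖ ≤ ‖gt p‖ + ‖J a b lam mu nu f p‖ := norm_sub_le _ _
      _ ≤ C + L * ‖f‖ := add_le_add (hgtb p) (J_bound a b lam mu nu ha.le hb.le f p)
  set Θ : E → E := fun f =>
    BoundedContinuousFunction.ofNormedAddCommGroup (Θraw f) (hΘc f) _ (hΘb f) with hΘ
  have hΘapp : ∀ (f : E) (p), Θ f p = gt p - J a b lam mu nu f p := fun f p => rfl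
  -- contraction
  have hcontr : ContractingWith ⟨L, hL0⟩ Θ := by
    constructor
    · exact NNReal.coe_lt_coe.mp hL1
    · apply LipschitzWith.of_dist_le_mul
      intro f f'
      apply BoundedContinuousFunction.dist_le_iff_of_nonempty.mpr
      intro p
      have e : Θ f p - Θ f' p = J a b lam mu nu (f' - f) p := by
        rw [hΘapp, hΘapp]
        have := J_sub a b lam mu nu f' f p
        linarith [this]
      show dist (Θ f p) (Θ f' p) ≤ L * dist f f'
      rw [dist_eq_norm, e, Real.norm_eq_abs, dist_eq_norm']
      exact J_bound a b lam mu nu ha.le hb.le (f' - f) p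
  -- fixed point
  set f₀ : E := ContractingWith.fixedPoint Θ hcontr with hf₀def
  have hfix : Θ f₀ = f₀ := hcontr.fixedPoint_isFixedPt
  refine ⟨fun X Y => f₀ (X, Y), ⟨?_, ?_⟩, ?_⟩
  · exact (by exact f₀.continuous : Continuous fun p : ℝ × ℝ => f₀ (p.1, p.2)).continuousOn
  · intro X hX Y hY
    have hclX : cl a X = X := cl_eq hX
    have hclY : cl b Y = Y := cl_eq hY
    have h := DFunLike.congr_fun hfix (X, Y)
    rw [hΘapp] at h
    unfold J at h
    simp only [hgt] at h
    simp only [hclX, hclY] at h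
    simp only []
    linarith [h]
  · rintro φ' ⟨hc', heq'⟩ X hX Y hY
    obtain ⟨C', hC'⟩ := hKcomp.exists_bound_of_continuousOn hc'
    set f' : E := BoundedContinuousFunction.ofNormedAddCommGroup
      (fun p => φ' (cl a p.1) (cl b p.2)) (hc'.comp_continuous hrcont hrmem) C'
      (fun p => hC' _ (hrmem p)) with hf'def
    have happ' : ∀ p : ℝ × ℝ, f' p = φ' (cl a p.1) (cl b p.2) := fun p => rfl
    have hfix' : Θ f' = f' := by
      ext p
      rw [hΘapp, happ']
      unfold J
      have hcX : cl a p.1 ∈ Set.Icc (0:ℝ) a := cl_mem ha.le _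
      have hcY : cl b p.2 ∈ Set.Icc (0:ℝ) b := cl_mem hb.le _
      have hmemx : ∀ x ∈ Set.uIcc (0:ℝ) (cl a p.1), x ∈ Set.Icc (0:ℝ) a := by
        intro x hx
        rw [Set.uIcc_of_le hcX.1] at hx
        exact ⟨hx.1, hx.2.trans hcX.2⟩
      have hmemy : ∀ y ∈ Set.uIcc (0:ℝ) (cl b p.2), y ∈ Set.Icc (0:ℝ) b := by
        intro y hy
        rw [Set.uIcc_of_le hcY.1] at hy
        exact ⟨hy.1, hy.2.trans hcY.2⟩
      have e1 : (∫ x in (0:ℝ)..cl a p.1, f' (x, cl b p.2))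
          = ∫ x in (0:ℝ)..cl a p.1, φ' x (cl b p.2) := by
        apply intervalIntegral.integral_congr
        intro x hx
        dsimp only
        rw [happ', cl_eq (hmemx x hx), cl_eq hcY]
      have e2 : (∫ y in (0:ℝ)..cl b p.2, f' (cl a p.1, y))
          = ∫ y in (0:ℝ)..cl b p.2, φ' (cl a p.1) y := by
        apply intervalIntegral.integral_congr
        intro y hy
        dsimp only
        rw [happ', cl_eq (hmemy y hy), cl_eq hcX]
      have e3 : (∫ x in (0:ℝ)..cl a p.1, ∫ y in (0:ℝ)..cl b p.2, f' (x, y))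
          = ∫ x in (0:ℝ)..cl a p.1, ∫ y in (0:ℝ)..cl b p.2, φ' x y := by
        apply intervalIntegral.integral_congr
        intro x hx
        apply intervalIntegral.integral_congr
        intro y hy
        dsimp only
        rw [happ', cl_eq (hmemx x hx), cl_eq (hmemy y hy)]
      rw [e1, e2, e3]
      have heqc := heq' _ hcX _ hcY
      have hgte : gt p = g (cl a p.1) (cl b p.2) := rfl
      rw [hgte]
      linarith [heqc]
    have hff : f' = f₀ := hcontr.fixedPoint_unique hfix'
    calc φ' X Y = f' (X, Y) := by rw [happ', cl_eq hX, cl_eq hY]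
      _ = f₀ (X, Y) := by rw [hff]
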